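/- For integers e ≥ 3 odd and 0 ≤ t ≤ (e−1)/2, the partition μ_{t,e} := (t, t−1, ..., 3, 2, 1^{e+1}) (i.e., the parts t, t−1, ..., 2 followed by e+1 parts equal to 1; interpreted as (1^e) when t = 0 and (1^{e+1}) when t = 1) has e-core equal to the staircase partition Δ_t and e-weight equal to 1. -/

import Mathlib

/-- The partition associated to a β-set `B = {b₁ > b₂ > ⋯ > b_k} ⊆ ℕ`: its `j`-th part
(0-indexed) is `b_{j+1} − (k − 1 − j)`. -/
def betaToPart (B : Finset ℕ) (j : ℕ) : ℕ :=
  if j < B.card then (B.sort (· ≤ ·)).getD (B.card - 1 - j) 0 - (B.card - 1 - j) else 0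

/-- Removing an `e`-hook from the partition with β-set `B`: replace an element
`y ∈ B` with `y ≥ e` and `y − e ∉ B` by `y − e`. -/
def hookRel (e : ℕ) (B B' : Finset ℕ) : Prop :=
  ∃ y ∈ B, e ≤ y ∧ y - e ∉ B ∧ B' = insert (y - e) (B.erase y)

/-- A β-set has no removable `e`-hook. -/
def NoEHook (e : ℕ) (C : Finset ℕ) : Prop := ∀ y ∈ C, e ≤ y → y - e ∈ C

/-- The staircase partition `Δ_t = (t, t−1, ..., 1)`, as a function. -/
def stair (t : ℕ) : ℕ → ℕ := fun j => t - j

/-- The partition with β-set `B` has `e`-core equal to `core`: some sequence of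
`e`-hook removals starting from `B` reaches a β-set with no `e`-hook whose associated
partition is `core`. -/
def HasECore (e : ℕ) (B : Finset ℕ) (core : ℕ → ℕ) : Prop :=
  ∃ C : Finset ℕ, Relation.ReflTransGen (hookRel e) B C ∧ NoEHook e C ∧ betaToPart C = core


/-- The partition `μ_{t,e} = (t, t−1, ..., 3, 2, 1^{e+1})` (interpreted as `(1^e)` for
`t = 0` and `(1^{e+1})` for `t = 1`), as a function giving its `j`-th part
(0-indexed). -/
lemma aux_sorted (l : List ℕ) (h : l.Pairwise (· < ·)) :
    ∀ i (hi : i < l.length), l[0]'(Nat.lt_of_le_of_lt (Nat.zero_le i) hi) + i ≤ l[i] := by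
  induction l with
  | nil => intro i hi; simp at hi
  | cons a l ih =>
    intro i hi
    match i with
    | 0 => simp
    | Nat.succ i =>
      have h1 : l.Pairwise (· < ·) := h.of_cons
      have hi' : i < l.length := by simpa using hi
      have h2 := ih h1 i hi'
      have h3 : a < l[0]'(Nat.lt_of_le_of_lt (Nat.zero_le i) hi') :=
        (List.pairwise_cons.mp h).1 _ (List.getElem_mem _)
      simp only [List.getElem_cons_succ, List.getElem_cons_zero]
      omega

lemma mem_iff_betaToPart (B : Finset ℕ) (x : ℕ) :
    x ∈ B ↔ ∃ j < B.card, x = betaToPart B j + (B.card - 1 - j) := by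
  have hlen : (B.sort (· ≤ ·)).length = B.card := Finset.length_sort _
  have hsort : (B.sort (· ≤ ·)).Pairwise (· < ·) := B.sortedLT_sort.pairwise
  have hmem : x ∈ B ↔ x ∈ B.sort (· ≤ ·) := (Finset.mem_sort _).symm
  rw [hmem, List.mem_iff_getElem]
  constructor
  · rintro ⟨i, hi, rfl⟩
    refine ⟨B.card - 1 - i, by omega, ?_⟩
    have h2 := aux_sorted _ hsort i hi
    unfold betaToPart
    rw [if_pos (by omega)]
    have h1 : B.card - 1 - (B.card - 1 - i) = i := by omega
    rw [h1, List.getD_eq_getElem _ _ (by omega : i < (B.sort (· ≤ ·)).length)]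
    omega
  · rintro ⟨j, hj, rfl⟩
    refine ⟨B.card - 1 - j, by omega, ?_⟩
    have h2 := aux_sorted _ hsort (B.card - 1 - j) (by omega)
    unfold betaToPart
    rw [if_pos hj, List.getD_eq_getElem _ _ (by omega : B.card - 1 - j < (B.sort (· ≤ ·)).length)]
    omega

lemma betaToPart_image (c : ℕ) (lam : ℕ → ℕ) (hmono : ∀ j, lam (j + 1) ≤ lam j)
    (hzero : ∀ j, c ≤ j → lam j = 0) :
    betaToPart ((Finset.range c).image (fun j => lam j + (c - 1 - j))) = lam := by
  set f : ℕ → ℕ := fun j => lam j + (c - 1 - j) with hf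
  have hanti : ∀ {i j}, i ≤ j → lam j ≤ lam i := fun h =>
    antitone_nat_of_succ_le hmono h
  have hstrict : ∀ i j, i < j → j < c → f j < f i := by
    intro i j hij hj
    have := hanti (le_of_lt hij)
    simp only [hf]
    omega
  set D := (Finset.range c).image f with hD
  set L := (List.range c).map (fun i => f (c - 1 - i)) with hL
  have hLlen : L.length = c := by simp [hL]
  have hLget : ∀ i (hi : i < c), L[i]'(by omega) = f (c - 1 - i) := by
    intro i hi
    simp [hL]
  have hLnodup : L.Nodup := by
    rw [hL, List.nodup_map_iff_inj_on (List.nodup_range (n := c))]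
    intro i hi j hj hij
    simp only [List.mem_range] at hi hj
    by_contra hne
    rcases Nat.lt_or_ge (c-1-i) (c-1-j) with h | h
    · exact absurd hij (Nat.ne_of_lt (hstrict _ _ h (by omega))).symm
    · have h' : c-1-j < c-1-i := by omega
      exact absurd hij (Nat.ne_of_lt (hstrict _ _ h' (by omega)))
  have hLsorted : L.Pairwise (· ≤ ·) := by
    rw [hL, List.pairwise_map]
    refine List.Pairwise.imp ?_ (List.pairwise_lt_range (n := c))
    intro a b hab
    have h1 : lam (c - 1 - a) ≤ lam (c - 1 - b) := hanti (by omega)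
    simp only [hf]
    omega
  have hLfin : L.toFinset = D := by
    ext x
    simp only [hL, hD, List.mem_toFinset, List.mem_map, List.mem_range, Finset.mem_image,
      Finset.mem_range]
    constructor
    · rintro ⟨i, hi, rfl⟩; exact ⟨c - 1 - i, by omega, rfl⟩
    · rintro ⟨j, hj, rfl⟩; exact ⟨c - 1 - j, by omega, by rw [show c-1-(c-1-j) = j by omega]⟩
  have hsortD : D.sort (· ≤ ·) = L := by
    refine List.Perm.eq_of_pairwise' (Finset.pairwise_sort _ _) hLsorted ?_
    exact List.perm_of_nodup_nodup_toFinset_eq (Finset.sort_nodup _ _) hLnodup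
      (by rw [Finset.sort_toFinset, hLfin])
  have hcard : D.card = c := by
    rw [← Finset.length_sort (· ≤ ·), hsortD, hLlen]
  funext j
  unfold betaToPart
  rw [hcard, hsortD]
  by_cases hj : j < c
  · rw [if_pos hj, List.getD_eq_getElem _ _ (by omega : c - 1 - j < L.length),
      hLget _ (by omega), show c - 1 - (c - 1 - j) = j by omega]
    simp only [hf]; omega
  · rw [if_neg hj, hzero j (by omega)]
def muPart (t e : ℕ) : ℕ → ℕ := fun j =>
  if j + 2 ≤ t then t - j
  else if j < (t - 1) + (if t = 0 then e else e + 1) then 1 else 0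

/-- For `e ≥ 3` odd and `0 ≤ t ≤ (e−1)/2`, the partition `μ_{t,e}` has `e`-core the
staircase `Δ_t` and `e`-weight `1`: removing a single `e`-hook from it yields a
partition with no `e`-hook, equal to `Δ_t`. -/
theorem stmt9 (e t : ℕ) (he : Odd e) (he3 : 3 ≤ e) (ht : t ≤ (e - 1) / 2)
    (B : Finset ℕ) (hB : betaToPart B = muPart t e) :
    ∃ C : Finset ℕ, hookRel e B C ∧ NoEHook e C ∧ betaToPart C = stair t := by
  obtain ⟨m, hm⟩ := he
  have he2t : 2 * t + 1 ≤ e := by omega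
  set k := B.card with hk
  set n := t + e with hn
  have hbound : (t - 1) + (if t = 0 then e else e + 1) = n := by split <;> omega
  have hmu : ∀ j, muPart t e j = if j + 2 ≤ t then t - j else if j < n then 1 else 0 := by
    intro j; unfold muPart; rw [hbound]
  have hBmem : ∀ x, x ∈ B ↔ ∃ j, j < k ∧
      x = (if j + 2 ≤ t then t - j else if j < n then 1 else 0) + (k - 1 - j) := by
    intro x
    rw [mem_iff_betaToPart]
    constructor
    · rintro ⟨j, hj, rfl⟩
      exact ⟨j, hj, by rw [hB, hmu]⟩
    · rintro ⟨j, hj, rfl⟩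
      exact ⟨j, hj, by rw [hB, hmu]⟩
  have hkn : n ≤ k := by
    by_contra hlt
    have h0 : betaToPart B k = 0 := by
      unfold betaToPart; rw [if_neg (by omega)]
    rw [hB, hmu] at h0
    split_ifs at h0 <;> omega
  have hyB : k - t ∈ B := by
    rw [hBmem]
    refine ⟨t, by omega, ?_⟩
    rw [if_neg (by omega), if_pos (by omega)]
    omega
  have hnotB : k - t - e ∉ B := by
    rw [hBmem]
    rintro ⟨j, hj, hx⟩
    split_ifs at hx <;> omega
  have hCeq : insert (k - t - e) (B.erase (k - t)) =
      (Finset.range k).image (fun j => (t - j) + (k - 1 - j)) := by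
    ext x
    simp only [Finset.mem_insert, Finset.mem_erase, Finset.mem_image, Finset.mem_range, hBmem]
    constructor
    · rintro (rfl | ⟨hne, j, hj, hx⟩)
      · exact ⟨n - 1, by omega, by omega⟩
      · by_cases h1 : j + 2 ≤ t
        · rw [if_pos h1] at hx
          exact ⟨j, by omega, by omega⟩
        · by_cases h2 : j < n
          · rw [if_neg h1, if_pos h2] at hx
            rcases Nat.lt_or_ge j t with h3 | h3
            · exact ⟨t - 1, by omega, by omega⟩
            · exact ⟨j - 1, by omega, by omega⟩
          · rw [if_neg h1, if_neg h2] at hx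
            exact ⟨j, by omega, by omega⟩
    · rintro ⟨j, hj, hx⟩
      rcases Nat.lt_or_ge j t with h1 | h1
      · by_cases h2 : j + 2 ≤ t
        · exact Or.inr ⟨by omega, j, hj, by rw [if_pos h2]; omega⟩
        · refine Or.inr ⟨by omega, j, hj, ?_⟩
          rw [if_neg (by omega), if_pos (by omega)]
          omega
      · rcases Nat.lt_or_ge j (n - 1) with h2 | h2
        · refine Or.inr ⟨by omega, j + 1, by omega, ?_⟩
          rw [if_neg (by omega), if_pos (by omega)]
          omega
        · rcases Nat.lt_or_ge j n with h3 | h3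
          · exact Or.inl (by omega)
          · refine Or.inr ⟨by omega, j, hj, ?_⟩
            rw [if_neg (by omega), if_neg (by omega)]
            omega
  refine ⟨insert (k - t - e) (B.erase (k - t)), ⟨k - t, hyB, by omega, hnotB, rfl⟩, ?_, ?_⟩ <;>
    rw [hCeq]
  · intro y hy hey
    simp only [Finset.mem_image, Finset.mem_range] at hy ⊢
    obtain ⟨j, hj, rfl⟩ := hy
    exact ⟨k - 1 - ((t - j) + (k - 1 - j) - e), by omega, by omega⟩
  · exact betaToPart_image k (stair t) (fun j => by unfold stair; omega)
      (fun j hj => by unfold stair; omega)
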